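/- Suppose φ, ξ ∈ L¹(ℝ) with 1 + (H₁ φ)(y) ≠ 0 for all y ∈ ℝ, and let ℓ ∈ L¹(ℝ) satisfy (H₁ ℓ)(y) = (H₁ φ)(y)/(1 + (H₁ φ)(y)). Then f := ℓ ∗_{H₁,F} ξ is the unique L¹(ℝ) solution of the integral equation f(x) + (f ∗_{H₁} φ)(x) = (φ ∗_{H₁,F} ξ)(x), and it satisfies ‖f‖_{L¹(ℝ)} ≤ √(2/π) ‖ℓ‖_{L¹(ℝ)} ‖ξ‖_{L¹(ℝ)}. -/

import Mathlib

open MeasureTheory Real Complex Filter Topology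

noncomputable def HFconv (f g : ℝ → ℂ) (x : ℝ) : ℂ :=
  (1 / (2 * Real.sqrt (2 * Real.pi))) *
    ∫ y : ℝ, g y * (f (x + y) + f (x - y) + Complex.I * f (-x - y) - Complex.I * f (-x + y))

noncomputable def Hconv (f g : ℝ → ℂ) (x : ℝ) : ℂ :=
  (1 / (2 * Real.sqrt (2 * Real.pi))) *
    ∫ y : ℝ, f y * (g (x + y) + g (x - y) + g (-x + y) - g (-x - y))

noncomputable def hartley (f : ℝ → ℂ) (y : ℝ) : ℂ :=
  (1 / Real.sqrt (2 * Real.pi)) *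
    ∫ x : ℝ, f x * ((Real.cos (x * y) + Real.sin (x * y) : ℝ) : ℂ)

open scoped FourierTransform RealInnerProductSpace SchwartzMap ContDiff

namespace Stmt18Aux

/-- the `cas` kernel of the Hartley transform -/
noncomputable def cas (a : ℝ) : ℂ := ((Real.cos a + Real.sin a : ℝ) : ℂ)

lemma cas_def (a : ℝ) : cas a = Complex.cos (a : ℂ) + Complex.sin (a : ℂ) := by
  simp [cas, Complex.ofReal_cos, Complex.ofReal_sin]

lemma continuous_cas : Continuous cas := by
  unfold cas; fun_prop

lemma norm_cas_le (a : ℝ) : ‖cas a‖ ≤ 2 := by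
  have h1 : |Real.cos a| ≤ 1 := Real.abs_cos_le_one a
  have h2 : |Real.sin a| ≤ 1 := Real.abs_sin_le_one a
  calc ‖cas a‖ = |Real.cos a + Real.sin a| := by
        rw [cas, Complex.norm_real, Real.norm_eq_abs]
    _ ≤ |Real.cos a| + |Real.sin a| := abs_add_le _ _
    _ ≤ 2 := by linarith

/-- Multiplying an integrable function by a bounded a.e.-measurable function. -/
lemma Integrable.mul_bdd2 {α : Type*} [MeasurableSpace α] {μ : Measure α}
    {f : α → ℂ} (hf : Integrable f μ) {k : α → ℂ}
    (hk : AEStronglyMeasurable k μ) {C : ℝ} (hbd : ∀ x, ‖k x‖ ≤ C) :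
    Integrable (fun x => f x * k x) μ := by
  have := hf.bdd_mul hk (Filter.Eventually.of_forall hbd)
  simpa [mul_comm] using this

lemma sqrt2pi_pos : 0 < Real.sqrt (2 * Real.pi) :=
  Real.sqrt_pos.mpr (by positivity)

variable {f g : ℝ → ℂ}

lemma int_prod_base (hf : Integrable f) (hg : Integrable g) :
    Integrable (fun p : ℝ × ℝ => g p.2 * f p.1)
      ((volume : Measure ℝ).prod volume) := by
  simpa [mul_comm] using hf.mul_prod hg

lemma intA (hf : Integrable f) (hg : Integrable g) :
    Integrable (fun p : ℝ × ℝ => g p.2 * f (p.1 + p.2))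
      ((volume : Measure ℝ).prod volume) := by
  have hb := int_prod_base hf hg
  have h := ((measurePreserving_add_prod (volume : Measure ℝ) volume).integrable_comp
    hb.aestronglyMeasurable).mpr hb
  simpa [Function.comp_def] using h

lemma intB (hf : Integrable f) (hg : Integrable g) :
    Integrable (fun p : ℝ × ℝ => g p.2 * f (p.1 - p.2))
      ((volume : Measure ℝ).prod volume) := by
  have hb := int_prod_base hf hg
  have h := ((measurePreserving_sub_prod (volume : Measure ℝ) volume).integrable_comp
    hb.aestronglyMeasurable).mpr hb
  simpa [Function.comp_def] using h

lemma intC (hf : Integrable f) (hg : Integrable g) :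
    Integrable (fun p : ℝ × ℝ => g p.2 * f (-p.1 - p.2))
      ((volume : Measure ℝ).prod volume) := by
  have hf' : Integrable (fun x => f (-x)) := hf.comp_neg
  have h := intA hf' hg
  exact h.congr (Filter.Eventually.of_forall fun p => by
    simp only; rw [show -(p.1 + p.2) = -p.1 - p.2 by ring])

lemma intD (hf : Integrable f) (hg : Integrable g) :
    Integrable (fun p : ℝ × ℝ => g p.2 * f (-p.1 + p.2))
      ((volume : Measure ℝ).prod volume) := by
  have hf' : Integrable (fun x => f (-x)) := hf.comp_neg
  have h := intB hf' hg
  exact h.congr (Filter.Eventually.of_forall fun p => by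
    simp only; rw [show -(p.1 - p.2) = -p.1 + p.2 by ring])

lemma intKerHF (hf : Integrable f) (hg : Integrable g) :
    Integrable (fun p : ℝ × ℝ =>
        g p.2 * (f (p.1 + p.2) + f (p.1 - p.2) + Complex.I * f (-p.1 - p.2)
          - Complex.I * f (-p.1 + p.2)))
      ((volume : Measure ℝ).prod volume) := by
  have h1 := intA hf hg
  have h2 := intB hf hg
  have h3 := intC hf hg
  have h4 := intD hf hg
  exact (((h1.add h2).add (h3.const_mul Complex.I)).sub (h4.const_mul Complex.I)).congr
    (Filter.Eventually.of_forall fun p => by simp only [Pi.add_apply, Pi.sub_apply]; ring)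

lemma intKerH (hf : Integrable f) (hg : Integrable g) :
    Integrable (fun p : ℝ × ℝ =>
        f p.2 * (g (p.1 + p.2) + g (p.1 - p.2) + g (-p.1 + p.2) - g (-p.1 - p.2)))
      ((volume : Measure ℝ).prod volume) := by
  have h1 := intA hg hf
  have h2 := intB hg hf
  have h3 := intD hg hf
  have h4 := intC hg hf
  exact (((h1.add h2).add h3).sub h4).congr
    (Filter.Eventually.of_forall fun p => by simp only [Pi.add_apply, Pi.sub_apply]; ring)

lemma integrable_HFconv (hf : Integrable f) (hg : Integrable g) :
    Integrable (HFconv f g) := by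
  have h := (intKerHF hf hg).integral_prod_left
  exact h.const_mul _

lemma integrable_Hconv (hf : Integrable f) (hg : Integrable g) :
    Integrable (Hconv f g) := by
  have h := (intKerH hf hg).integral_prod_left
  exact h.const_mul _

/-! ### Substitution lemmas -/

lemma S1 (f : ℝ → ℂ) (y t : ℝ) :
    ∫ x : ℝ, f (x + y) * cas (x * t) = ∫ u : ℝ, f u * cas ((u - y) * t) := by
  have h := integral_sub_right_eq_self (μ := (volume : Measure ℝ))
    (fun u => f (u + y) * cas (u * t)) y
  simpa using h.symm

lemma S2 (f : ℝ → ℂ) (y t : ℝ) :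
    ∫ x : ℝ, f (x - y) * cas (x * t) = ∫ u : ℝ, f u * cas ((u + y) * t) := by
  have h := integral_add_right_eq_self (μ := (volume : Measure ℝ))
    (fun u => f (u - y) * cas (u * t)) y
  simpa using h.symm

lemma S3 (f : ℝ → ℂ) (y t : ℝ) :
    ∫ x : ℝ, f (-x - y) * cas (x * t) = ∫ u : ℝ, f u * cas (-((u + y) * t)) := by
  have h1 : ∫ x : ℝ, f (-x - y) * cas (x * t)
      = ∫ x : ℝ, f (x - y) * cas (-(x * t)) := by
    have h := integral_neg_eq_self (μ := (volume : Measure ℝ))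
      (fun x => f (x - y) * cas (-(x * t)))
    rw [← h]
    congr 1 with x
    rw [show -x - y = (-x) - y by ring, show -(-x * t) = x * t by ring]
  rw [h1]
  have h := integral_add_right_eq_self (μ := (volume : Measure ℝ))
    (fun u => f (u - y) * cas (-(u * t))) y
  simpa using h.symm

lemma S4 (f : ℝ → ℂ) (y t : ℝ) :
    ∫ x : ℝ, f (-x + y) * cas (x * t) = ∫ u : ℝ, f u * cas (-((u - y) * t)) := by
  have h1 : ∫ x : ℝ, f (-x + y) * cas (x * t)
      = ∫ x : ℝ, f (x + y) * cas (-(x * t)) := by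
    have h := integral_neg_eq_self (μ := (volume : Measure ℝ))
      (fun x => f (x + y) * cas (-(x * t)))
    rw [← h]
    congr 1 with x
    rw [show -x + y = (-x) + y by ring, show -(-x * t) = x * t by ring]
  rw [h1]
  have h := integral_sub_right_eq_self (μ := (volume : Measure ℝ))
    (fun u => f (u + y) * cas (-(u * t))) y
  simpa using h.symm

/-! ### Trigonometric identities -/

lemma cas_comb (u y t : ℝ) :
    cas ((u - y) * t) + cas ((u + y) * t) + Complex.I * cas (-((u + y) * t))
      - Complex.I * cas (-((u - y) * t))
    = 2 * cas (u * t) * Complex.exp (((-(y * t) : ℝ) : ℂ) * Complex.I) := by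
  simp only [cas_def]
  push_cast
  rw [show ((u - y) * t : ℂ) = u * t - y * t by ring,
    show ((u + y) * t : ℂ) = u * t + y * t by ring]
  rw [Complex.exp_mul_I]
  simp only [Complex.cos_sub, Complex.sin_sub, Complex.cos_add, Complex.sin_add,
    Complex.cos_neg, Complex.sin_neg]
  ring

lemma cas_comb2 (u y t : ℝ) :
    cas ((u - y) * t) + cas ((u + y) * t) + cas (-((u - y) * t)) - cas (-((u + y) * t))
    = 2 * cas (u * t) * cas (y * t) := by
  simp only [cas_def]
  push_cast
  rw [show ((u - y) * t : ℂ) = u * t - y * t by ring,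
    show ((u + y) * t : ℂ) = u * t + y * t by ring]
  simp only [Complex.cos_sub, Complex.sin_sub, Complex.cos_add, Complex.sin_add,
    Complex.cos_neg, Complex.sin_neg]
  ring

/-! ### Integrability of pieces multiplied by bounded kernels -/

lemma int_mul_cas (hf : Integrable f) (k : ℝ → ℝ) (hk : Continuous k) :
    Integrable (fun x => f x * cas (k x)) := by
  exact Integrable.mul_bdd2 hf ((continuous_cas.comp hk).aestronglyMeasurable)
    (fun x => norm_cas_le (k x))

lemma int_shift_add (hf : Integrable f) (y : ℝ) :
    Integrable (fun x => f (x + y)) := hf.comp_add_right y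

lemma int_shift_sub (hf : Integrable f) (y : ℝ) :
    Integrable (fun x => f (x - y)) := hf.comp_sub_right y

lemma int_shift_negsub (hf : Integrable f) (y : ℝ) :
    Integrable (fun x => f (-x - y)) := by
  have h := (hf.comp_neg).comp_add_right y
  exact h.congr (Filter.Eventually.of_forall fun x => by
    simp only; rw [show -(x + y) = -x - y by ring])

lemma int_shift_negadd (hf : Integrable f) (y : ℝ) :
    Integrable (fun x => f (-x + y)) := by
  have h := (hf.comp_neg).comp_sub_right y
  exact h.congr (Filter.Eventually.of_forall fun x => by
    simp only; rw [show -(x - y) = -x + y by ring])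

/-! ### Inner transform computations -/

lemma inner_stepHF (hf : Integrable f) (y t : ℝ) :
    (∫ x : ℝ, (f (x + y) + f (x - y) + Complex.I * f (-x - y) - Complex.I * f (-x + y))
        * cas (x * t))
    = (2 * Complex.exp (((-(y * t) : ℝ) : ℂ) * Complex.I)) * ∫ u : ℝ, f u * cas (u * t) := by
  have cont : Continuous (fun x : ℝ => x * t) := by fun_prop
  have i1 := int_mul_cas (int_shift_add hf y) _ cont
  have i2 := int_mul_cas (int_shift_sub hf y) _ cont
  have i3 := int_mul_cas (int_shift_negsub hf y) _ cont
  have i4 := int_mul_cas (int_shift_negadd hf y) _ cont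
  have e0 : (∫ x : ℝ, (f (x + y) + f (x - y) + Complex.I * f (-x - y)
        - Complex.I * f (-x + y)) * cas (x * t))
      = ∫ x : ℝ, (f (x + y) * cas (x * t) + f (x - y) * cas (x * t)
          + Complex.I * (f (-x - y) * cas (x * t)) - Complex.I * (f (-x + y) * cas (x * t))) :=
    integral_congr_ae (Filter.Eventually.of_forall fun x => by ring)
  rw [e0]
  have i3' : Integrable (fun x => Complex.I * (f (-x - y) * cas (x * t))) := i3.const_mul _
  have i4' : Integrable (fun x => Complex.I * (f (-x + y) * cas (x * t))) := i4.const_mul _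
  have i12 : Integrable (fun x => f (x + y) * cas (x * t) + f (x - y) * cas (x * t)) := i1.add i2
  have i123 : Integrable (fun x => f (x + y) * cas (x * t) + f (x - y) * cas (x * t)
      + Complex.I * (f (-x - y) * cas (x * t))) := i12.add i3'
  rw [integral_sub i123 i4', integral_add i12 i3', integral_add i1 i2,
    integral_const_mul, integral_const_mul]
  rw [S1, S2, S3, S4]
  have j1 := int_mul_cas hf (fun u => (u - y) * t) (by fun_prop)
  have j2 := int_mul_cas hf (fun u => (u + y) * t) (by fun_prop)
  have j3 := int_mul_cas hf (fun u => -((u + y) * t)) (by fun_prop)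
  have j4 := int_mul_cas hf (fun u => -((u - y) * t)) (by fun_prop)
  have j3' : Integrable (fun u => Complex.I * (f u * cas (-((u + y) * t)))) := j3.const_mul _
  have j4' : Integrable (fun u => Complex.I * (f u * cas (-((u - y) * t)))) := j4.const_mul _
  have j12 : Integrable (fun u => f u * cas ((u - y) * t) + f u * cas ((u + y) * t)) := j1.add j2
  have j123 : Integrable (fun u => f u * cas ((u - y) * t) + f u * cas ((u + y) * t)
      + Complex.I * (f u * cas (-((u + y) * t)))) := j12.add j3'
  rw [← integral_const_mul Complex.I, ← integral_const_mul Complex.I,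
    ← integral_add j1 j2, ← integral_add j12 j3', ← integral_sub j123 j4']
  have e1 : (∫ u : ℝ, (f u * cas ((u - y) * t) + f u * cas ((u + y) * t)
      + Complex.I * (f u * cas (-((u + y) * t))) - Complex.I * (f u * cas (-((u - y) * t)))))
      = ∫ u : ℝ, (2 * Complex.exp (((-(y * t) : ℝ) : ℂ) * Complex.I)) * (f u * cas (u * t)) :=
    integral_congr_ae (Filter.Eventually.of_forall fun u => by
      have := cas_comb u y t
      calc f u * cas ((u - y) * t) + f u * cas ((u + y) * t)
            + Complex.I * (f u * cas (-((u + y) * t)))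
            - Complex.I * (f u * cas (-((u - y) * t)))
          = f u * (cas ((u - y) * t) + cas ((u + y) * t) + Complex.I * cas (-((u + y) * t))
              - Complex.I * cas (-((u - y) * t))) := by ring
        _ = f u * (2 * cas (u * t) * Complex.exp (((-(y * t) : ℝ) : ℂ) * Complex.I)) := by
              rw [this]
        _ = (2 * Complex.exp (((-(y * t) : ℝ) : ℂ) * Complex.I)) * (f u * cas (u * t)) := by
              ring)
  rw [e1, integral_const_mul]

lemma inner_stepH (hg : Integrable g) (y t : ℝ) :
    (∫ x : ℝ, (g (x + y) + g (x - y) + g (-x + y) - g (-x - y)) * cas (x * t))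
    = (2 * cas (y * t)) * ∫ u : ℝ, g u * cas (u * t) := by
  have cont : Continuous (fun x : ℝ => x * t) := by fun_prop
  have i1 := int_mul_cas (int_shift_add hg y) _ cont
  have i2 := int_mul_cas (int_shift_sub hg y) _ cont
  have i3 := int_mul_cas (int_shift_negadd hg y) _ cont
  have i4 := int_mul_cas (int_shift_negsub hg y) _ cont
  have e0 : (∫ x : ℝ, (g (x + y) + g (x - y) + g (-x + y) - g (-x - y)) * cas (x * t))
      = ∫ x : ℝ, (g (x + y) * cas (x * t) + g (x - y) * cas (x * t)
          + g (-x + y) * cas (x * t) - g (-x - y) * cas (x * t)) :=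
    integral_congr_ae (Filter.Eventually.of_forall fun x => by ring)
  rw [e0]
  have i12 : Integrable (fun x => g (x + y) * cas (x * t) + g (x - y) * cas (x * t)) := i1.add i2
  have i123 : Integrable (fun x => g (x + y) * cas (x * t) + g (x - y) * cas (x * t)
      + g (-x + y) * cas (x * t)) := i12.add i3
  rw [integral_sub i123 i4, integral_add i12 i3, integral_add i1 i2]
  rw [S1, S2, S3, S4]
  have j1 := int_mul_cas hg (fun u => (u - y) * t) (by fun_prop)
  have j2 := int_mul_cas hg (fun u => (u + y) * t) (by fun_prop)
  have j3 := int_mul_cas hg (fun u => -((u - y) * t)) (by fun_prop)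
  have j4 := int_mul_cas hg (fun u => -((u + y) * t)) (by fun_prop)
  have j12 : Integrable (fun u => g u * cas ((u - y) * t) + g u * cas ((u + y) * t)) := j1.add j2
  have j123 : Integrable (fun u => g u * cas ((u - y) * t) + g u * cas ((u + y) * t)
      + g u * cas (-((u - y) * t))) := j12.add j3
  rw [← integral_add j1 j2, ← integral_add j12 j3, ← integral_sub j123 j4]
  have e1 : (∫ u : ℝ, (g u * cas ((u - y) * t) + g u * cas ((u + y) * t)
      + g u * cas (-((u - y) * t)) - g u * cas (-((u + y) * t))))
      = ∫ u : ℝ, (2 * cas (y * t)) * (g u * cas (u * t)) :=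
    integral_congr_ae (Filter.Eventually.of_forall fun u => by
      have := cas_comb2 u y t
      calc g u * cas ((u - y) * t) + g u * cas ((u + y) * t)
            + g u * cas (-((u - y) * t)) - g u * cas (-((u + y) * t))
          = g u * (cas ((u - y) * t) + cas ((u + y) * t) + cas (-((u - y) * t))
              - cas (-((u + y) * t))) := by ring
        _ = g u * (2 * cas (u * t) * cas (y * t)) := by rw [this]
        _ = (2 * cas (y * t)) * (g u * cas (u * t)) := by ring)
  rw [e1, integral_const_mul]

/-! ### hartley basics -/

lemma hartley_eq (f : ℝ → ℂ) (t : ℝ) :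
    hartley f t = (1 / ((Real.sqrt (2 * Real.pi) : ℝ) : ℂ)) * ∫ x : ℝ, f x * cas (x * t) := by
  simp only [hartley, cas]

/-- the (suitably normalized) Fourier transform -/
noncomputable def myF (g : ℝ → ℂ) (t : ℝ) : ℂ :=
  (1 / ((Real.sqrt (2 * Real.pi) : ℝ) : ℂ)) *
    ∫ y : ℝ, g y * Complex.exp (((-(y * t) : ℝ) : ℂ) * Complex.I)

lemma hartley_congr {f g : ℝ → ℂ} (h : f =ᶠ[ae volume] g) (t : ℝ) :
    hartley f t = hartley g t := by
  rw [hartley_eq, hartley_eq]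
  congr 1
  exact integral_congr_ae (h.mono fun x hx => by dsimp only; rw [hx])

lemma hartley_add (hf : Integrable f) (hg : Integrable g) (t : ℝ) :
    hartley (fun x => f x + g x) t = hartley f t + hartley g t := by
  simp only [hartley_eq]
  rw [← mul_add]
  congr 1
  rw [← integral_add (int_mul_cas hf _ (by fun_prop)) (int_mul_cas hg _ (by fun_prop))]
  exact integral_congr_ae (Filter.Eventually.of_forall fun x => by ring)

lemma hartley_sub (hf : Integrable f) (hg : Integrable g) (t : ℝ) :
    hartley (fun x => f x - g x) t = hartley f t - hartley g t := by
  simp only [hartley_eq]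
  rw [← mul_sub]
  congr 1
  rw [← integral_sub (int_mul_cas hf _ (by fun_prop)) (int_mul_cas hg _ (by fun_prop))]
  exact integral_congr_ae (Filter.Eventually.of_forall fun x => by ring)

/-! ### Factorization identities -/

lemma hartley_HFconv (hf : Integrable f) (hg : Integrable g) (t : ℝ) :
    hartley (HFconv f g) t = hartley f t * myF g t := by
  have hker := intKerHF hf hg
  have hkerc : Integrable (fun p : ℝ × ℝ =>
      (g p.2 * (f (p.1 + p.2) + f (p.1 - p.2) + Complex.I * f (-p.1 - p.2)
        - Complex.I * f (-p.1 + p.2))) * cas (p.1 * t))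
      ((volume : Measure ℝ).prod volume) :=
    Integrable.mul_bdd2 hker
      ((continuous_cas.comp (by fun_prop : Continuous fun p : ℝ × ℝ => p.1 * t)).aestronglyMeasurable)
      (fun p => norm_cas_le _)
  rw [hartley_eq]
  have e1 : (∫ x : ℝ, HFconv f g x * cas (x * t))
      = (1 / (2 * ((Real.sqrt (2 * Real.pi) : ℝ) : ℂ))) *
        ∫ x : ℝ, ∫ y : ℝ, (g y * (f (x + y) + f (x - y) + Complex.I * f (-x - y)
          - Complex.I * f (-x + y))) * cas (x * t) := by
    rw [← integral_const_mul]
    refine integral_congr_ae (Filter.Eventually.of_forall fun x => ?_)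
    simp only [HFconv]
    rw [mul_assoc, ← integral_mul_const]
  rw [e1]
  rw [integral_integral_swap hkerc]
  have e2 : (∫ y : ℝ, ∫ x : ℝ, (g y * (f (x + y) + f (x - y) + Complex.I * f (-x - y)
        - Complex.I * f (-x + y))) * cas (x * t))
      = ∫ y : ℝ, (2 * (∫ u : ℝ, f u * cas (u * t)))
          * (g y * Complex.exp (((-(y * t) : ℝ) : ℂ) * Complex.I)) := by
    refine integral_congr_ae (Filter.Eventually.of_forall fun y => ?_)
    dsimp only
    have e3 : (∫ x : ℝ, (g y * (f (x + y) + f (x - y) + Complex.I * f (-x - y)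
          - Complex.I * f (-x + y))) * cas (x * t))
        = g y * ∫ x : ℝ, (f (x + y) + f (x - y) + Complex.I * f (-x - y)
          - Complex.I * f (-x + y)) * cas (x * t) := by
      rw [← integral_const_mul]
      exact integral_congr_ae (Filter.Eventually.of_forall fun x => by ring)
    rw [e3, inner_stepHF hf y t]
    ring
  rw [e2, integral_const_mul]
  rw [hartley_eq, myF]
  have h2 : Real.sqrt (2 * Real.pi) ≠ 0 := ne_of_gt sqrt2pi_pos
  have hc : (1 / (2 * ((Real.sqrt (2 * Real.pi) : ℝ) : ℂ))) * 2
      = (1 / ((Real.sqrt (2 * Real.pi) : ℝ) : ℂ)) := by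
    have h3 : ((Real.sqrt (2 * Real.pi) : ℝ) : ℂ) ≠ 0 := by exact_mod_cast h2
    field_simp
  calc (1 / ((Real.sqrt (2 * Real.pi) : ℝ) : ℂ)) *
        ((1 / (2 * ((Real.sqrt (2 * Real.pi) : ℝ) : ℂ))) *
          ((2 * (∫ u : ℝ, f u * cas (u * t)))
            * ∫ y : ℝ, g y * Complex.exp (((-(y * t) : ℝ) : ℂ) * Complex.I)))
      = (1 / ((Real.sqrt (2 * Real.pi) : ℝ) : ℂ)) *
        (((1 / (2 * ((Real.sqrt (2 * Real.pi) : ℝ) : ℂ))) * 2) *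
          ((∫ u : ℝ, f u * cas (u * t))
            * ∫ y : ℝ, g y * Complex.exp (((-(y * t) : ℝ) : ℂ) * Complex.I))) := by ring
    _ = _ := by rw [hc]; ring

lemma hartley_Hconv (hf : Integrable f) (hg : Integrable g) (t : ℝ) :
    hartley (Hconv f g) t = hartley f t * hartley g t := by
  have hker := intKerH hf hg
  have hkerc : Integrable (fun p : ℝ × ℝ =>
      (f p.2 * (g (p.1 + p.2) + g (p.1 - p.2) + g (-p.1 + p.2) - g (-p.1 - p.2)))
        * cas (p.1 * t))
      ((volume : Measure ℝ).prod volume) :=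
    Integrable.mul_bdd2 hker
      ((continuous_cas.comp (by fun_prop : Continuous fun p : ℝ × ℝ => p.1 * t)).aestronglyMeasurable)
      (fun p => norm_cas_le _)
  rw [hartley_eq]
  have e1 : (∫ x : ℝ, Hconv f g x * cas (x * t))
      = (1 / (2 * ((Real.sqrt (2 * Real.pi) : ℝ) : ℂ))) *
        ∫ x : ℝ, ∫ y : ℝ, (f y * (g (x + y) + g (x - y) + g (-x + y) - g (-x - y)))
          * cas (x * t) := by
    rw [← integral_const_mul]
    refine integral_congr_ae (Filter.Eventually.of_forall fun x => ?_)
    simp only [Hconv]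
    rw [mul_assoc, ← integral_mul_const]
  rw [e1]
  rw [integral_integral_swap hkerc]
  have e2 : (∫ y : ℝ, ∫ x : ℝ, (f y * (g (x + y) + g (x - y) + g (-x + y) - g (-x - y)))
        * cas (x * t))
      = ∫ y : ℝ, (2 * (∫ u : ℝ, g u * cas (u * t))) * (f y * cas (y * t)) := by
    refine integral_congr_ae (Filter.Eventually.of_forall fun y => ?_)
    dsimp only
    have e3 : (∫ x : ℝ, (f y * (g (x + y) + g (x - y) + g (-x + y) - g (-x - y)))
          * cas (x * t))
        = f y * ∫ x : ℝ, (g (x + y) + g (x - y) + g (-x + y) - g (-x - y)) * cas (x * t) := by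
      rw [← integral_const_mul]
      exact integral_congr_ae (Filter.Eventually.of_forall fun x => by ring)
    rw [e3, inner_stepH hg y t]
    ring
  rw [e2, integral_const_mul]
  rw [hartley_eq, hartley_eq]
  have h2 : Real.sqrt (2 * Real.pi) ≠ 0 := ne_of_gt sqrt2pi_pos
  have hc : (1 / (2 * ((Real.sqrt (2 * Real.pi) : ℝ) : ℂ))) * 2
      = (1 / ((Real.sqrt (2 * Real.pi) : ℝ) : ℂ)) := by
    have h3 : ((Real.sqrt (2 * Real.pi) : ℝ) : ℂ) ≠ 0 := by exact_mod_cast h2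
    field_simp
  calc (1 / ((Real.sqrt (2 * Real.pi) : ℝ) : ℂ)) *
        ((1 / (2 * ((Real.sqrt (2 * Real.pi) : ℝ) : ℂ))) *
          ((2 * (∫ u : ℝ, g u * cas (u * t))) * ∫ y : ℝ, f y * cas (y * t)))
      = (1 / ((Real.sqrt (2 * Real.pi) : ℝ) : ℂ)) *
        (((1 / (2 * ((Real.sqrt (2 * Real.pi) : ℝ) : ℂ))) * 2) *
          ((∫ u : ℝ, g u * cas (u * t)) * ∫ y : ℝ, f y * cas (y * t))) := by ring
    _ = _ := by rw [hc]; ring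

/-! ### Injectivity of the Hartley transform -/

/-- A smooth compactly supported function is a Schwartz function. -/
noncomputable def toSchwartz (g : ℝ → ℂ) (hsm : ContDiff ℝ ∞ g)
    (hsupp : HasCompactSupport g) : 𝓢(ℝ, ℂ) where
  toFun := g
  smooth' := hsm
  decay' := by
    intro k n
    have hdc : Continuous (iteratedFDeriv ℝ n g) :=
      hsm.continuous_iteratedFDeriv (mod_cast le_top)
    have hcont : Continuous (fun x : ℝ => ‖x‖ ^ k * ‖iteratedFDeriv ℝ n g x‖) := by
      fun_prop
    have hcs0 : HasCompactSupport (fun x : ℝ => ‖iteratedFDeriv ℝ n g x‖) :=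
      (hsupp.iteratedFDeriv n).comp_left (g := fun z => ‖z‖) norm_zero
    have hcs : HasCompactSupport (fun x : ℝ => ‖x‖ ^ k * ‖iteratedFDeriv ℝ n g x‖) :=
      hcs0.mul_left
    obtain ⟨C, hC⟩ := hcs.exists_bound_of_continuous hcont
    refine ⟨C, fun x => ?_⟩
    have hx := hC x
    rw [Real.norm_eq_abs, _root_.abs_of_nonneg (by positivity)] at hx
    exact hx

lemma fourier_eq_zero_ae {f : ℝ → ℂ} (hf : Integrable f) (h0 : ∀ v : ℝ, 𝓕 f v = 0) :
    ∀ᵐ x : ℝ ∂volume, f x = 0 := by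
  apply ae_eq_zero_of_integral_contDiff_smul_eq_zero (hf.locallyIntegrable)
  intro g hgsm hgsupp
  have hGsm : ContDiff ℝ ∞ (fun x : ℝ => (g x : ℂ)) := Complex.ofRealCLM.contDiff.comp hgsm
  have hGsupp : HasCompactSupport (fun x : ℝ => (g x : ℂ)) :=
    hgsupp.comp_left (g := fun r : ℝ => (r : ℂ)) Complex.ofReal_zero
  set Gs := toSchwartz _ hGsm hGsupp with hGs
  set h := (FourierTransform.fourierCLE ℂ 𝓢(ℝ, ℂ)).symm Gs with hh
  have hFh : 𝓕 (⇑h) = fun x : ℝ => (g x : ℂ) := by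
    have h1 := (FourierTransform.fourierCLE ℂ 𝓢(ℝ, ℂ)).apply_symm_apply Gs
    calc 𝓕 ⇑h = ⇑(FourierTransform.fourierCLE ℂ 𝓢(ℝ, ℂ) h) := rfl
      _ = ⇑Gs := by rw [h1]
      _ = fun x : ℝ => (g x : ℂ) := rfl
  have hLcont : Continuous fun p : ℝ × ℝ => (innerₗ ℝ) p.1 p.2 := by
    simpa using (continuous_inner : Continuous fun p : ℝ × ℝ => (inner ℝ p.1 p.2 : ℝ))
  have hmul := VectorFourier.integral_fourierIntegral_smul_eq_flip
      (e := Real.fourierChar) (L := innerₗ ℝ) (μ := (volume : Measure ℝ))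
      (ν := (volume : Measure ℝ)) Real.continuous_fourierChar hLcont h.integrable hf
  rw [flip_innerₗ] at hmul
  have hV : (fun ξ : ℝ => VectorFourier.fourierIntegral Real.fourierChar volume
      (innerₗ ℝ) (⇑h) ξ) = 𝓕 ⇑h := rfl
  have hV2 : ∀ x : ℝ, VectorFourier.fourierIntegral Real.fourierChar volume
      (innerₗ ℝ) f x = 0 := fun x => h0 x
  have hz : ∫ ξ : ℝ, (𝓕 (⇑h) ξ) • f ξ = 0 := by
    have hmul' : ∫ ξ : ℝ, (𝓕 (⇑h) ξ) • f ξ = ∫ x : ℝ, (⇑h x) • (𝓕 f x) := hmul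
    rw [hmul']
    simp only [h0, smul_zero, integral_zero]
  calc ∫ x : ℝ, g x • f x = ∫ x : ℝ, (𝓕 (⇑h) x) • f x := by
        refine integral_congr_ae (Filter.Eventually.of_forall fun x => ?_)
        rw [hFh]
        simp [Complex.real_smul]
    _ = 0 := hz

lemma hartley_ae_zero {f : ℝ → ℂ} (hf : Integrable f) (h : ∀ t, hartley f t = 0) :
    ∀ᵐ x : ℝ ∂volume, f x = 0 := by
  have hsq : (1 / ((Real.sqrt (2 * Real.pi) : ℝ) : ℂ)) ≠ 0 := by
    apply one_div_ne_zero
    exact_mod_cast ne_of_gt sqrt2pi_pos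
  have hC : ∀ t : ℝ, Integrable (fun x => f x * ((Real.cos (x * t) : ℝ) : ℂ)) := fun t =>
    Integrable.mul_bdd2 hf
      ((Complex.continuous_ofReal.comp (Real.continuous_cos.comp
        (continuous_id.mul continuous_const))).aestronglyMeasurable)
      (C := 1) (fun x => by
        rw [Complex.norm_real, Real.norm_eq_abs]; exact Real.abs_cos_le_one _)
  have hS : ∀ t : ℝ, Integrable (fun x => f x * ((Real.sin (x * t) : ℝ) : ℂ)) := fun t =>
    Integrable.mul_bdd2 hf
      ((Complex.continuous_ofReal.comp (Real.continuous_sin.comp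
        (continuous_id.mul continuous_const))).aestronglyMeasurable)
      (C := 1) (fun x => by
        rw [Complex.norm_real, Real.norm_eq_abs]; exact Real.abs_sin_le_one _)
  have key : ∀ t : ℝ, (∫ x : ℝ, f x * ((Real.cos (x * t) : ℝ) : ℂ)) = 0
      ∧ (∫ x : ℝ, f x * ((Real.sin (x * t) : ℝ) : ℂ)) = 0 := by
    intro t
    have h1 : ∫ x : ℝ, f x * cas (x * t) = 0 := by
      have := h t; rw [hartley_eq] at this
      exact (mul_eq_zero.mp this).resolve_left hsq
    have h2 : ∫ x : ℝ, f x * cas (x * (-t)) = 0 := by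
      have := h (-t); rw [hartley_eq] at this
      exact (mul_eq_zero.mp this).resolve_left hsq
    have e1 : ∫ x : ℝ, f x * cas (x * t)
        = (∫ x : ℝ, f x * ((Real.cos (x * t) : ℝ) : ℂ))
          + ∫ x : ℝ, f x * ((Real.sin (x * t) : ℝ) : ℂ) := by
      rw [← integral_add (hC t) (hS t)]
      refine integral_congr_ae (Filter.Eventually.of_forall fun x => ?_)
      simp only [cas_def]; push_cast; ring
    have e2 : ∫ x : ℝ, f x * cas (x * (-t))
        = (∫ x : ℝ, f x * ((Real.cos (x * t) : ℝ) : ℂ))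
          - ∫ x : ℝ, f x * ((Real.sin (x * t) : ℝ) : ℂ) := by
      rw [← integral_sub (hC t) (hS t)]
      refine integral_congr_ae (Filter.Eventually.of_forall fun x => ?_)
      simp only [cas_def]
      push_cast
      rw [show ((x : ℂ) * (-(t : ℂ))) = -((x : ℂ) * (t : ℂ)) by ring,
        Complex.cos_neg, Complex.sin_neg]
      ring
    rw [e1] at h1; rw [e2] at h2
    constructor
    · linear_combination (h1 + h2) / 2
    · linear_combination (h1 - h2) / 2
  have hF : ∀ v : ℝ, 𝓕 f v = 0 := by
    intro v
    rw [Real.fourier_real_eq_integral_exp_smul]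
    have e : ∀ x : ℝ, Complex.exp (((-2 * Real.pi * x * v : ℝ) : ℂ) * Complex.I) • f x
        = f x * ((Real.cos (x * (2 * Real.pi * v)) : ℝ) : ℂ)
          - Complex.I * (f x * ((Real.sin (x * (2 * Real.pi * v)) : ℝ) : ℂ)) := by
      intro x
      rw [smul_eq_mul,
        show ((-2 * Real.pi * x * v : ℝ) : ℂ) = -((x * (2 * Real.pi * v) : ℝ) : ℂ) by
          push_cast; ring,
        Complex.exp_mul_I, Complex.cos_neg, Complex.sin_neg,
        ← Complex.ofReal_cos, ← Complex.ofReal_sin]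
      ring
    rw [integral_congr_ae (Filter.Eventually.of_forall e),
      integral_sub (hC _) ((hS _).const_mul Complex.I), integral_const_mul,
      (key _).1, (key _).2]
    simp
  exact fourier_eq_zero_ae hf hF

lemma hartley_inj {f g : ℝ → ℂ} (hf : Integrable f) (hg : Integrable g)
    (h : ∀ t, hartley f t = hartley g t) : f =ᶠ[ae volume] g := by
  have h0 := hartley_ae_zero (f := fun x => f x - g x) (hf.sub hg)
    (fun t => by rw [hartley_sub hf hg t, h t]; ring)
  filter_upwards [h0] with x hx
  exact sub_eq_zero.mp hx

/-! ### Norm bound -/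

lemma norm_HFconv_bound {f g : ℝ → ℂ} (hf : Integrable f) (hg : Integrable g) :
    ∫ x : ℝ, ‖HFconv f g x‖ ≤
      Real.sqrt (2 / Real.pi) * (∫ x : ℝ, ‖f x‖) * (∫ x : ℝ, ‖g x‖) := by
  have hker := intKerHF hf hg
  have hKn : Integrable (fun p : ℝ × ℝ =>
      ‖g p.2 * (f (p.1 + p.2) + f (p.1 - p.2) + Complex.I * f (-p.1 - p.2)
        - Complex.I * f (-p.1 + p.2))‖) ((volume : Measure ℝ).prod volume) := hker.norm
  -- the dominating kernel
  have m1 : Integrable (fun p : ℝ × ℝ => ‖g p.2‖ * ‖f (p.1 + p.2)‖)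
      ((volume : Measure ℝ).prod volume) := by simpa [norm_mul] using (intA hf hg).norm
  have m2 : Integrable (fun p : ℝ × ℝ => ‖g p.2‖ * ‖f (p.1 - p.2)‖)
      ((volume : Measure ℝ).prod volume) := by simpa [norm_mul] using (intB hf hg).norm
  have m3 : Integrable (fun p : ℝ × ℝ => ‖g p.2‖ * ‖f (-p.1 - p.2)‖)
      ((volume : Measure ℝ).prod volume) := by simpa [norm_mul] using (intC hf hg).norm
  have m4 : Integrable (fun p : ℝ × ℝ => ‖g p.2‖ * ‖f (-p.1 + p.2)‖)
      ((volume : Measure ℝ).prod volume) := by simpa [norm_mul] using (intD hf hg).norm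
  have intM : Integrable (fun p : ℝ × ℝ =>
      ‖g p.2‖ * (‖f (p.1 + p.2)‖ + ‖f (p.1 - p.2)‖ + ‖f (-p.1 - p.2)‖ + ‖f (-p.1 + p.2)‖))
      ((volume : Measure ℝ).prod volume) :=
    (((m1.add m2).add m3).add m4).congr (Filter.Eventually.of_forall fun p => by
      simp only [Pi.add_apply]; ring)
  have hle : ∀ p : ℝ × ℝ,
      ‖g p.2 * (f (p.1 + p.2) + f (p.1 - p.2) + Complex.I * f (-p.1 - p.2)
        - Complex.I * f (-p.1 + p.2))‖
      ≤ ‖g p.2‖ * (‖f (p.1 + p.2)‖ + ‖f (p.1 - p.2)‖ + ‖f (-p.1 - p.2)‖ + ‖f (-p.1 + p.2)‖) := by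
    intro p
    rw [norm_mul]
    have hb : ‖f (p.1 + p.2) + f (p.1 - p.2) + Complex.I * f (-p.1 - p.2)
        - Complex.I * f (-p.1 + p.2)‖
        ≤ ‖f (p.1 + p.2)‖ + ‖f (p.1 - p.2)‖ + ‖f (-p.1 - p.2)‖ + ‖f (-p.1 + p.2)‖ := by
      have t0 := norm_add_le (f (p.1 + p.2)) (f (p.1 - p.2))
      have t1 := norm_add_le (f (p.1 + p.2) + f (p.1 - p.2)) (Complex.I * f (-p.1 - p.2))
      have t2 := norm_sub_le (f (p.1 + p.2) + f (p.1 - p.2) + Complex.I * f (-p.1 - p.2))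
        (Complex.I * f (-p.1 + p.2))
      rw [norm_mul, Complex.norm_I, one_mul] at t1 t2
      linarith
    exact mul_le_mul_of_nonneg_left hb (norm_nonneg _)
  -- value of the dominating integral
  have hswap : (∫ p : ℝ × ℝ,
        ‖g p.2‖ * (‖f (p.1 + p.2)‖ + ‖f (p.1 - p.2)‖ + ‖f (-p.1 - p.2)‖ + ‖f (-p.1 + p.2)‖)
        ∂((volume : Measure ℝ).prod volume))
      = (∫ x : ℝ, ‖g x‖) * (4 * ∫ x : ℝ, ‖f x‖) := by
    have hI : (∫ p : ℝ × ℝ,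
          ‖g p.2‖ * (‖f (p.1 + p.2)‖ + ‖f (p.1 - p.2)‖ + ‖f (-p.1 - p.2)‖ + ‖f (-p.1 + p.2)‖)
          ∂((volume : Measure ℝ).prod volume))
        = ∫ x : ℝ, ∫ y : ℝ,
            ‖g y‖ * (‖f (x + y)‖ + ‖f (x - y)‖ + ‖f (-x - y)‖ + ‖f (-x + y)‖) :=
      (integral_integral (f := fun x y : ℝ =>
        ‖g y‖ * (‖f (x + y)‖ + ‖f (x - y)‖ + ‖f (-x - y)‖ + ‖f (-x + y)‖)) intM).symm
    have hII : (∫ x : ℝ, ∫ y : ℝ,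
          ‖g y‖ * (‖f (x + y)‖ + ‖f (x - y)‖ + ‖f (-x - y)‖ + ‖f (-x + y)‖))
        = ∫ y : ℝ, ∫ x : ℝ,
            ‖g y‖ * (‖f (x + y)‖ + ‖f (x - y)‖ + ‖f (-x - y)‖ + ‖f (-x + y)‖) :=
      integral_integral_swap (f := fun x y : ℝ =>
        ‖g y‖ * (‖f (x + y)‖ + ‖f (x - y)‖ + ‖f (-x - y)‖ + ‖f (-x + y)‖)) intM
    rw [hI, hII]
    have inner : ∀ y : ℝ, (∫ x : ℝ,
        ‖g y‖ * (‖f (x + y)‖ + ‖f (x - y)‖ + ‖f (-x - y)‖ + ‖f (-x + y)‖))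
        = ‖g y‖ * (4 * ∫ x : ℝ, ‖f x‖) := by
      intro y
      rw [integral_const_mul]
      congr 1
      have n1 : Integrable (fun x : ℝ => ‖f (x + y)‖) := (hf.norm).comp_add_right y
      have n2 : Integrable (fun x : ℝ => ‖f (x - y)‖) := (hf.norm).comp_sub_right y
      have n3 : Integrable (fun x : ℝ => ‖f (-x - y)‖) := by
        have := ((hf.norm).comp_neg).comp_add_right y
        exact this.congr (Filter.Eventually.of_forall fun x => by
          simp only; rw [show -(x + y) = -x - y by ring])
      have n4 : Integrable (fun x : ℝ => ‖f (-x + y)‖) := by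
        have := ((hf.norm).comp_neg).comp_sub_right y
        exact this.congr (Filter.Eventually.of_forall fun x => by
          simp only; rw [show -(x - y) = -x + y by ring])
      have n12 : Integrable (fun x : ℝ => ‖f (x + y)‖ + ‖f (x - y)‖) := n1.add n2
      have n123 : Integrable (fun x : ℝ => ‖f (x + y)‖ + ‖f (x - y)‖ + ‖f (-x - y)‖) :=
        n12.add n3
      rw [integral_add n123 n4, integral_add n12 n3, integral_add n1 n2]
      have e1 : (∫ x : ℝ, ‖f (x + y)‖) = ∫ x : ℝ, ‖f x‖ :=
        integral_add_right_eq_self (fun x => ‖f x‖) y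
      have e2 : (∫ x : ℝ, ‖f (x - y)‖) = ∫ x : ℝ, ‖f x‖ :=
        integral_sub_right_eq_self (fun x => ‖f x‖) y
      have e3 : (∫ x : ℝ, ‖f (-x - y)‖) = ∫ x : ℝ, ‖f x‖ := by
        have h3 := integral_neg_eq_self (μ := (volume : Measure ℝ))
          (fun x : ℝ => ‖f (x - y)‖)
        exact h3.trans e2
      have e4 : (∫ x : ℝ, ‖f (-x + y)‖) = ∫ x : ℝ, ‖f x‖ := by
        have h4 := integral_neg_eq_self (μ := (volume : Measure ℝ))
          (fun x : ℝ => ‖f (x + y)‖)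
        exact h4.trans e1
      rw [e1, e2, e3, e4]
      ring
    rw [integral_congr_ae (Filter.Eventually.of_forall inner), integral_mul_const]
  -- put the pieces together
  have hnormC : ∀ x : ℝ, ‖HFconv f g x‖
      = (1 / (2 * Real.sqrt (2 * Real.pi))) *
        ‖∫ y : ℝ, g y * (f (x + y) + f (x - y) + Complex.I * f (-x - y)
          - Complex.I * f (-x + y))‖ := by
    intro x
    simp only [HFconv]
    rw [norm_mul]
    congr 1
    rw [norm_div, norm_one, norm_mul, Complex.norm_real, Real.norm_eq_abs,
      _root_.abs_of_nonneg (Real.sqrt_nonneg _)]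
    norm_num
  have step1 : ∫ x : ℝ, ‖HFconv f g x‖
      = (1 / (2 * Real.sqrt (2 * Real.pi))) *
        ∫ x : ℝ, ‖∫ y : ℝ, g y * (f (x + y) + f (x - y) + Complex.I * f (-x - y)
          - Complex.I * f (-x + y))‖ := by
    rw [← integral_const_mul]
    exact integral_congr_ae (Filter.Eventually.of_forall hnormC)
  have int1 : Integrable (fun x : ℝ => ‖∫ y : ℝ, g y * (f (x + y) + f (x - y)
      + Complex.I * f (-x - y) - Complex.I * f (-x + y))‖) := (hker.integral_prod_left).norm
  have int2 : Integrable (fun x : ℝ => ∫ y : ℝ, ‖g y * (f (x + y) + f (x - y)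
      + Complex.I * f (-x - y) - Complex.I * f (-x + y))‖) := hKn.integral_prod_left
  have step2 : (∫ x : ℝ, ‖∫ y : ℝ, g y * (f (x + y) + f (x - y) + Complex.I * f (-x - y)
        - Complex.I * f (-x + y))‖)
      ≤ ∫ x : ℝ, ∫ y : ℝ, ‖g y * (f (x + y) + f (x - y) + Complex.I * f (-x - y)
        - Complex.I * f (-x + y))‖ :=
    integral_mono int1 int2 (fun x => norm_integral_le_integral_norm _)
  have step3 : (∫ x : ℝ, ∫ y : ℝ, ‖g y * (f (x + y) + f (x - y) + Complex.I * f (-x - y)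
        - Complex.I * f (-x + y))‖)
      ≤ (∫ x : ℝ, ‖g x‖) * (4 * ∫ x : ℝ, ‖f x‖) := by
    have hIK : (∫ x : ℝ, ∫ y : ℝ, ‖g y * (f (x + y) + f (x - y) + Complex.I * f (-x - y)
          - Complex.I * f (-x + y))‖)
        = ∫ p : ℝ × ℝ, ‖g p.2 * (f (p.1 + p.2) + f (p.1 - p.2) + Complex.I * f (-p.1 - p.2)
          - Complex.I * f (-p.1 + p.2))‖ ∂((volume : Measure ℝ).prod volume) :=
      integral_integral (f := fun x y : ℝ => ‖g y * (f (x + y) + f (x - y)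
        + Complex.I * f (-x - y) - Complex.I * f (-x + y))‖) hKn
    rw [hIK, ← hswap]
    exact integral_mono hKn intM hle
  have hfpos : 0 ≤ ∫ x : ℝ, ‖f x‖ := integral_nonneg fun x => norm_nonneg _
  have hgpos : 0 ≤ ∫ x : ℝ, ‖g x‖ := integral_nonneg fun x => norm_nonneg _
  have hsqrt : Real.sqrt (2 / Real.pi) = 2 / Real.sqrt (2 * Real.pi) := by
    have h1 : (2 / Real.pi : ℝ) = 2 ^ 2 / (2 * Real.pi) := by
      rw [div_eq_div_iff Real.pi_pos.ne' (by positivity)]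
      ring
    rw [h1, Real.sqrt_div (by positivity) _, Real.sqrt_sq (by norm_num : (0:ℝ) ≤ 2)]
  calc ∫ x : ℝ, ‖HFconv f g x‖
      ≤ (1 / (2 * Real.sqrt (2 * Real.pi))) * ((∫ x : ℝ, ‖g x‖) * (4 * ∫ x : ℝ, ‖f x‖)) := by
        rw [step1]
        refine mul_le_mul_of_nonneg_left (step2.trans step3) (by positivity)
    _ = Real.sqrt (2 / Real.pi) * (∫ x : ℝ, ‖f x‖) * (∫ x : ℝ, ‖g x‖) := by
        rw [hsqrt]
        field_simp
        ring

end Stmt18Aux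

theorem stmt18 (φ ξ ℓ : ℝ → ℂ)
    (hφ : Integrable φ) (hξ : Integrable ξ) (hℓ : Integrable ℓ)
    (hne : ∀ y : ℝ, 1 + hartley φ y ≠ 0)
    (hℓeq : ∀ y : ℝ, hartley ℓ y = hartley φ y / (1 + hartley φ y)) :
    Integrable (HFconv ℓ ξ) ∧
      (∀ᵐ x : ℝ ∂volume, HFconv ℓ ξ x + Hconv (HFconv ℓ ξ) φ x = HFconv φ ξ x) ∧
      (∀ f : ℝ → ℂ, Integrable f →
        (∀ᵐ x : ℝ ∂volume, f x + Hconv f φ x = HFconv φ ξ x) →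
        f =ᶠ[ae volume] HFconv ℓ ξ) ∧
      ∫ x : ℝ, ‖HFconv ℓ ξ x‖ ≤
        Real.sqrt (2 / Real.pi) * (∫ x : ℝ, ‖ℓ x‖) * (∫ x : ℝ, ‖ξ x‖) := by
  have hf0 : Integrable (HFconv ℓ ξ) := Stmt18Aux.integrable_HFconv hℓ hξ
  have hR : Integrable (HFconv φ ξ) := Stmt18Aux.integrable_HFconv hφ hξ
  have hHc : Integrable (Hconv (HFconv ℓ ξ) φ) := Stmt18Aux.integrable_Hconv hf0 hφ
  have hsum0 : Integrable (fun x => HFconv ℓ ξ x + Hconv (HFconv ℓ ξ) φ x) := hf0.add hHc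
  have key2 : ∀ᵐ x : ℝ ∂volume,
      HFconv ℓ ξ x + Hconv (HFconv ℓ ξ) φ x = HFconv φ ξ x := by
    have hinj := Stmt18Aux.hartley_inj hsum0 hR ?_
    · filter_upwards [hinj] with x hx
      exact hx
    · intro t
      rw [Stmt18Aux.hartley_add hf0 hHc t, Stmt18Aux.hartley_Hconv hf0 hφ t,
        Stmt18Aux.hartley_HFconv hℓ hξ t, Stmt18Aux.hartley_HFconv hφ hξ t, hℓeq t]
      have h2 := hne t
      field_simp
  refine ⟨hf0, key2, ?_, ?_⟩
  · intro f hfi hfeq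
    have hHf : Integrable (Hconv f φ) := Stmt18Aux.integrable_Hconv hfi hφ
    have heq : ∀ t, hartley f t = hartley (HFconv ℓ ξ) t := by
      intro t
      have e1 : hartley (fun x => f x + Hconv f φ x) t = hartley (HFconv φ ξ) t :=
        Stmt18Aux.hartley_congr (hfeq.mono fun x hx => hx) t
      have e2 : hartley (fun x => HFconv ℓ ξ x + Hconv (HFconv ℓ ξ) φ x) t
          = hartley (HFconv φ ξ) t :=
        Stmt18Aux.hartley_congr (key2.mono fun x hx => hx) t
      rw [Stmt18Aux.hartley_add hfi hHf t, Stmt18Aux.hartley_Hconv hfi hφ t] at e1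
      rw [Stmt18Aux.hartley_add hf0 hHc t, Stmt18Aux.hartley_Hconv hf0 hφ t] at e2
      have h3 : (hartley f t - hartley (HFconv ℓ ξ) t) * (1 + hartley φ t) = 0 := by
        linear_combination e1 - e2
      rcases mul_eq_zero.mp h3 with h4 | h4
      · exact sub_eq_zero.mp h4
      · exact absurd h4 (hne t)
    exact Stmt18Aux.hartley_inj hfi hf0 heq
  · exact Stmt18Aux.norm_HFconv_bound hℓ hξ
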